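/- Let S, T ∈ SU(N) with S conjugate to Φ_i and T conjugate to Φ_j, where i + j ≤ N. If the (-ζ^i)-eigenspace of S is orthogonal to the (-ζ^j)-eigenspace of T, then the product ST is conjugate to Φ_{i+j} in SU(N). -/

import Mathlib

noncomputable section

def zeta (N : ℕ) : ℂ := Complex.exp (Real.pi * Complex.I / N)

def Phi (N j : ℕ) : Matrix (Fin N) (Fin N) ℂ :=
  Matrix.diagonal (fun a => if (a : ℕ) < j then -(zeta N) ^ j else (zeta N) ^ j)

def ConjIn (N : ℕ) (S T : Matrix (Fin N) (Fin N) ℂ) : Prop :=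
  ∃ U ∈ Matrix.specialUnitaryGroup (Fin N) ℂ, S = U * T * U.conjTranspose

/-- The eigenspace of the matrix `S`, acting on `ℂ^N` with its standard Hermitian inner
product, for the eigenvalue `c`. -/
def eigSp (N : ℕ) (S : Matrix (Fin N) (Fin N) ℂ) (c : ℂ) :
    Submodule ℂ (EuclideanSpace ℂ (Fin N)) where
  carrier := {v | S.mulVec v = c • v}
  add_mem' := by
    intro a b ha hb
    simp only [Set.mem_setOf_eq] at *
    show S.mulVec (a + b) = c • (a + b)
    rw [Matrix.mulVec_add, ha, hb, smul_add]
  zero_mem' := by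
    show S.mulVec 0 = c • (0 : EuclideanSpace ℂ (Fin N))
    rw [Matrix.mulVec_zero]
    simp
  smul_mem' := by
    intro d v hv
    simp only [Set.mem_setOf_eq] at *
    show S.mulVec (d • v) = c • (d • v)
    rw [Matrix.mulVec_smul, hv, smul_comm]

section Aux

open Matrix Finset

/-- the rank-`k` standard projection -/
def ind (N k : ℕ) : Matrix (Fin N) (Fin N) ℂ :=
  Matrix.diagonal (fun a => if (a : ℕ) < k then 1 else 0)

lemma phi_eq (N k : ℕ) :
    Phi N k = (zeta N) ^ k • ((1 : Matrix (Fin N) (Fin N) ℂ) - (2 : ℂ) • ind N k) := by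
  ext a b
  by_cases hab : a = b
  · subst hab
    simp only [Phi, ind, Matrix.diagonal_apply_eq, Matrix.smul_apply, Matrix.sub_apply,
      Matrix.one_apply_eq, smul_eq_mul]
    split_ifs <;> ring
  · simp [Phi, ind, Matrix.diagonal_apply_ne _ hab, Matrix.one_apply_ne hab]

lemma card_filter_lt (N k : ℕ) (hk : k ≤ N) :
    (Finset.univ.filter (fun a : Fin N => (a : ℕ) < k)).card = k := by
  rw [← Fintype.card_subtype]
  have e : {a : Fin N // (a : ℕ) < k} ≃ Fin k :=
    { toFun := fun a => ⟨a.1.1, a.2⟩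
      invFun := fun b => ⟨⟨b.1, lt_of_lt_of_le b.2 hk⟩, b.2⟩
      left_inv := fun a => by ext; rfl
      right_inv := fun b => rfl }
  rw [Fintype.card_congr e, Fintype.card_fin]

lemma trace_ind (N k : ℕ) (hk : k ≤ N) : (ind N k).trace = (k : ℂ) := by
  rw [ind, Matrix.trace_diagonal]
  rw [Finset.sum_boole]
  rw [card_filter_lt N k hk]

lemma ind_mul_ind (N k : ℕ) : ind N k * ind N k = ind N k := by
  rw [ind, Matrix.diagonal_mul_diagonal]
  exact congrArg Matrix.diagonal (funext fun a => by by_cases h : (a : ℕ) < k <;> simp [h])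

lemma ind_conjTranspose (N k : ℕ) : (ind N k)ᴴ = ind N k := by
  rw [ind, Matrix.diagonal_conjTranspose]
  exact congrArg Matrix.diagonal (funext fun a => by
    by_cases h : (a : ℕ) < k <;> simp [h, Pi.star_apply])

/-- turn a unitary conjugation into a special-unitary conjugation -/
lemma conjIn_of_unitary {N : ℕ} (hN : 0 < N) (W A B : Matrix (Fin N) (Fin N) ℂ)
    (hW : W ∈ Matrix.unitaryGroup (Fin N) ℂ) (h : B = W * A * Wᴴ) :
    ConjIn N B A := by
  have hd : W.det ∈ unitary ℂ := Matrix.det_of_mem_unitary hW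
  have hd1 : (starRingEnd ℂ) W.det * W.det = 1 := (Unitary.mem_iff.mp hd).1
  have habs : ‖W.det‖ = 1 := by
    have h2 : Complex.normSq W.det = 1 := by
      have h3 : ((Complex.normSq W.det : ℝ) : ℂ) = 1 := by
        rw [Complex.normSq_eq_conj_mul_self]; exact hd1
      exact_mod_cast h3
    have := Complex.sq_norm W.det
    rw [h2] at this
    nlinarith [norm_nonneg W.det]
  have hd0 : W.det ≠ 0 := by
    intro h0
    rw [h0] at habs
    simp at habs
  set z : ℂ := -(Complex.log W.det) / N with hz
  have hzre : z.re = 0 := by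
    have hlogre : (Complex.log W.det).re = 0 := by
      rw [Complex.log_re, habs, Real.log_one]
    rw [hz, Complex.div_re]
    simp [hlogre]
  set c : ℂ := Complex.exp z with hc
  have hcc : (starRingEnd ℂ) c * c = 1 := by
    rw [hc, ← Complex.exp_conj, ← Complex.exp_add]
    have : (starRingEnd ℂ) z + z = 0 := by
      apply Complex.ext <;> simp [hzre]
    rw [this, Complex.exp_zero]
  have hNC : (N : ℂ) ≠ 0 := Nat.cast_ne_zero.mpr (by omega)
  have hcN : c ^ N * W.det = 1 := by
    rw [hc, ← Complex.exp_nat_mul]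
    have : (N : ℂ) * z = -(Complex.log W.det) := by
      rw [hz]
      field_simp
    rw [this, Complex.exp_neg, Complex.exp_log hd0]
    field_simp
  refine ⟨c • W, ?_, ?_⟩
  · rw [Matrix.mem_specialUnitaryGroup_iff]
    constructor
    · rw [Matrix.mem_unitaryGroup_iff']
      rw [star_smul, Matrix.smul_mul, Matrix.mul_smul, smul_smul]
      rw [Matrix.mem_unitaryGroup_iff'.mp hW]
      rw [show (star c : ℂ) = (starRingEnd ℂ) c from rfl, hcc, one_smul]
    · rw [Matrix.det_smul, Fintype.card_fin, hcN]
  · rw [h]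
    rw [Matrix.conjTranspose_smul, Matrix.smul_mul, Matrix.mul_smul, Matrix.smul_mul,
      smul_smul]
    rw [show (star c : ℂ) = (starRingEnd ℂ) c from rfl]
    rw [hcc, one_smul]

lemma conj_cancel {N : ℕ} {V A B : Matrix (Fin N) (Fin N) ℂ}
    (h1 : Vᴴ * V = 1) (h2 : V * Vᴴ = 1) (h : V * A * Vᴴ = V * B * Vᴴ) : A = B := by
  have key : ∀ X : Matrix (Fin N) (Fin N) ℂ, Vᴴ * (V * X * Vᴴ) * V = X := by
    intro X
    simp only [← Matrix.mul_assoc]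
    rw [h1, Matrix.one_mul, Matrix.mul_assoc, h1, Matrix.mul_one]
  rw [← key A, h, key B]

/-- extract the projection from a conjugation to `Phi` -/
lemma exists_proj {N k : ℕ} (hk : k ≤ N) (S : Matrix (Fin N) (Fin N) ℂ)
    (h : ConjIn N S (Phi N k)) :
    ∃ P : Matrix (Fin N) (Fin N) ℂ, Pᴴ = P ∧ P * P = P ∧ P.trace = (k : ℂ) ∧
      S = (zeta N) ^ k • ((1 : Matrix (Fin N) (Fin N) ℂ) - (2 : ℂ) • P) := by
  obtain ⟨U, hU, rfl⟩ := h
  have hUu : U ∈ Matrix.unitaryGroup (Fin N) ℂ := hU.1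
  have hU1 : U * Uᴴ = 1 := by
    have := Matrix.mem_unitaryGroup_iff.mp hUu
    rwa [Matrix.star_eq_conjTranspose] at this
  have hU2 : Uᴴ * U = 1 := by
    have := Matrix.mem_unitaryGroup_iff'.mp hUu
    rwa [Matrix.star_eq_conjTranspose] at this
  refine ⟨U * ind N k * Uᴴ, ?_, ?_, ?_, ?_⟩
  · simp only [Matrix.conjTranspose_mul, Matrix.conjTranspose_conjTranspose,
      ind_conjTranspose, Matrix.mul_assoc]
  · have : U * ind N k * Uᴴ * (U * ind N k * Uᴴ) = U * (ind N k * (Uᴴ * U) * ind N k) * Uᴴ := by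
      simp only [Matrix.mul_assoc]
    rw [this, hU2, Matrix.mul_one, ind_mul_ind]
  · rw [Matrix.trace_mul_cycle, hU2, Matrix.one_mul, trace_ind N k hk]
  · rw [phi_eq]
    rw [Matrix.mul_smul, Matrix.smul_mul]
    congr 1
    rw [Matrix.mul_sub, Matrix.sub_mul, Matrix.mul_one, hU1]
    congr 1
    rw [mul_smul_comm, smul_mul_assoc]

lemma mem_eigSp_of_proj {N k : ℕ} (S P : Matrix (Fin N) (Fin N) ℂ)
    (hPP : P * P = P)
    (hS : S = (zeta N) ^ k • ((1 : Matrix (Fin N) (Fin N) ℂ) - (2 : ℂ) • P))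
    (v : Fin N → ℂ) :
    (WithLp.toLp 2 (P.mulVec v) : EuclideanSpace ℂ (Fin N)) ∈ eigSp N S (-(zeta N) ^ k) := by
  show S.mulVec (P.mulVec v) = (-(zeta N) ^ k) • (P.mulVec v)
  rw [hS, Matrix.smul_mulVec, Matrix.sub_mulVec, Matrix.one_mulVec,
    Matrix.smul_mulVec, Matrix.mulVec_mulVec, hPP]
  funext a
  simp only [Pi.smul_apply, Pi.sub_apply, smul_eq_mul]
  ring

/-- existence of a permutation sorting a set of given cardinality to an initial segment -/
lemma exists_perm {N m : ℕ} (p : Fin N → Prop) [DecidablePred p]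
    (hc : (Finset.univ.filter p).card = m) :
    ∃ σ : Equiv.Perm (Fin N), ∀ a : Fin N, p (σ a) ↔ (a : ℕ) < m := by
  have hm : m ≤ N := by
    rw [← hc]
    exact le_trans (Finset.card_filter_le _ _) (by simp)
  have h1 : Fintype.card {a : Fin N // p a} = m := by
    rw [Fintype.card_subtype]; exact hc
  have h2 : Fintype.card {a : Fin N // ¬ p a} = N - m := by
    rw [Fintype.card_subtype_compl, h1, Fintype.card_fin]
  let e1 : Fin m ≃ {a : Fin N // p a} := (Fintype.equivFinOfCardEq h1).symm
  let e2 : Fin (N - m) ≃ {a : Fin N // ¬ p a} := (Fintype.equivFinOfCardEq h2).symm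
  have hmn : m + (N - m) = N := by omega
  let e0 : Fin N ≃ Fin m ⊕ Fin (N - m) := (finCongr hmn).symm.trans finSumFinEquiv.symm
  refine ⟨e0.trans ((e1.sumCongr e2).trans (Equiv.sumCompl p)), fun a => ?_⟩
  by_cases ha : (a : ℕ) < m
  · have he0 : e0 a = Sum.inl ⟨(a : ℕ), ha⟩ := by
      show finSumFinEquiv.symm ((finCongr hmn).symm a) = _
      rw [Equiv.symm_apply_eq]
      apply Fin.ext
      simp
    simp only [Equiv.trans_apply, he0, Equiv.sumCongr_apply, Sum.map_inl,
      Equiv.sumCompl_apply_inl]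
    exact iff_of_true (e1 ⟨(a : ℕ), ha⟩).2 ha
  · have he0 : e0 a = Sum.inr ⟨(a : ℕ) - m, by omega⟩ := by
      show finSumFinEquiv.symm ((finCongr hmn).symm a) = _
      rw [Equiv.symm_apply_eq]
      apply Fin.ext
      simp
      omega
    simp only [Equiv.trans_apply, he0, Equiv.sumCongr_apply, Sum.map_inr,
      Equiv.sumCompl_apply_inr]
    exact iff_of_false (e2 ⟨(a : ℕ) - m, by omega⟩).2 ha

lemma submatrix_conj_eq {N : ℕ} (V : Matrix (Fin N) (Fin N) ℂ) (v : Fin N → ℂ)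
    (σ : Equiv.Perm (Fin N)) :
    (V.submatrix id ⇑σ) * Matrix.diagonal (v ∘ ⇑σ) * (V.submatrix id ⇑σ)ᴴ
      = V * Matrix.diagonal v * Vᴴ := by
  ext a b
  rw [Matrix.mul_apply, Matrix.mul_apply]
  simp only [Matrix.mul_diagonal, Matrix.conjTranspose_apply, Matrix.submatrix_apply,
    id_eq, Function.comp_apply]
  exact Equiv.sum_comp σ (fun k => V a k * v k * (starRingEnd ℂ) (V b k))

lemma submatrix_unitary {N : ℕ} (V : Matrix (Fin N) (Fin N) ℂ)
    (hV : V ∈ Matrix.unitaryGroup (Fin N) ℂ) (σ : Equiv.Perm (Fin N)) :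
    V.submatrix id ⇑σ ∈ Matrix.unitaryGroup (Fin N) ℂ := by
  rw [Matrix.mem_unitaryGroup_iff]
  have hV1 : V * Vᴴ = 1 := by
    have := Matrix.mem_unitaryGroup_iff.mp hV
    rwa [Matrix.star_eq_conjTranspose] at this
  rw [Matrix.star_eq_conjTranspose]
  have : V.submatrix id ⇑σ * (V.submatrix id ⇑σ)ᴴ = V * Vᴴ := by
    ext a b
    simp only [Matrix.mul_apply, Matrix.conjTranspose_apply, Matrix.submatrix_apply, id_eq]
    exact Equiv.sum_comp σ (fun k => V a k * (starRingEnd ℂ) (V b k))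
  rw [this, hV1]

/-- a Hermitian projection of trace `m` is unitarily conjugate to `ind N m` -/
lemma proj_conj {N m : ℕ} (hm : m ≤ N) (R : Matrix (Fin N) (Fin N) ℂ)
    (hH : Rᴴ = R) (hId : R * R = R) (htr : R.trace = (m : ℂ)) :
    ∃ W ∈ Matrix.unitaryGroup (Fin N) ℂ, R = W * ind N m * Wᴴ := by
  classical
  have hA : R.IsHermitian := hH
  set V : Matrix (Fin N) (Fin N) ℂ := (hA.eigenvectorUnitary : Matrix (Fin N) (Fin N) ℂ)
    with hV
  set ev : Fin N → ℝ := hA.eigenvalues with hev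
  have hVu : V ∈ Matrix.unitaryGroup (Fin N) ℂ := hA.eigenvectorUnitary.2
  have hV1 : V * Vᴴ = 1 := by
    have := Matrix.mem_unitaryGroup_iff.mp hVu
    rwa [Matrix.star_eq_conjTranspose] at this
  have hV2 : Vᴴ * V = 1 := by
    have := Matrix.mem_unitaryGroup_iff'.mp hVu
    rwa [Matrix.star_eq_conjTranspose] at this
  have spec : R = V * Matrix.diagonal (RCLike.ofReal ∘ ev) * Vᴴ := by
    have h := hA.spectral_theorem
    rwa [Unitary.conjStarAlgAut_apply, Matrix.star_eq_conjTranspose, ← hV, ← hev] at h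
  set D : Matrix (Fin N) (Fin N) ℂ := Matrix.diagonal (RCLike.ofReal ∘ ev) with hD
  have hDD : D * D = D := by
    apply conj_cancel hV2 hV1
    have h1 : V * (D * D) * Vᴴ = (V * D * Vᴴ) * (V * D * Vᴴ) := by
      have hx : ∀ X : Matrix (Fin N) (Fin N) ℂ, Vᴴ * (V * X) = X := by
        intro X
        rw [← Matrix.mul_assoc, hV2, Matrix.one_mul]
      simp only [Matrix.mul_assoc, hx]
    rw [h1, ← spec, hId, spec]
  have hev01 : ∀ a, ev a = 0 ∨ ev a = 1 := by
    intro a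
    have : ((ev a : ℂ)) * ((ev a : ℂ)) = (ev a : ℂ) := by
      have := hDD
      rw [hD, Matrix.diagonal_mul_diagonal] at this
      have := congrFun (Matrix.diagonal_injective this) a
      simpa using this
    have hr : ev a * ev a = ev a := by exact_mod_cast this
    have h0 : ev a * (ev a - 1) = 0 := by ring_nf; linarith [hr]
    rcases mul_eq_zero.mp h0 with h | h
    · exact Or.inl h
    · exact Or.inr (by linarith)
  have hsum : ∑ a, ev a = (m : ℝ) := by
    have : R.trace = ((∑ a, ev a : ℝ) : ℂ) := by
      rw [spec, Matrix.trace_mul_cycle, hV2, Matrix.one_mul, hD, Matrix.trace_diagonal]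
      push_cast
      rfl
    rw [htr] at this
    exact_mod_cast this.symm
  have hcard : (Finset.univ.filter (fun a : Fin N => ev a = 1)).card = m := by
    have hsplit : ∑ a, ev a
        = ∑ a ∈ Finset.univ.filter (fun a : Fin N => ev a = 1), ev a
          + ∑ a ∈ Finset.univ.filter (fun a : Fin N => ¬ ev a = 1), ev a :=
      (Finset.sum_filter_add_sum_filter_not _ _ _).symm
    have h1 : ∑ a ∈ Finset.univ.filter (fun a : Fin N => ev a = 1), ev a
        = ((Finset.univ.filter (fun a : Fin N => ev a = 1)).card : ℝ) := by
      rw [Finset.sum_congr rfl (fun a ha => (Finset.mem_filter.mp ha).2)]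
      simp
    have h2 : ∑ a ∈ Finset.univ.filter (fun a : Fin N => ¬ ev a = 1), ev a = 0 := by
      apply Finset.sum_eq_zero
      intro a ha
      rcases hev01 a with h | h
      · exact h
      · exact absurd h (Finset.mem_filter.mp ha).2
    have : ((Finset.univ.filter (fun a : Fin N => ev a = 1)).card : ℝ) = (m : ℝ) := by
      rw [← h1, ← hsum, hsplit, h2, add_zero]
    exact_mod_cast this
  obtain ⟨σ, hσ⟩ := exists_perm (fun a : Fin N => ev a = 1) hcard
  refine ⟨V.submatrix id ⇑σ, submatrix_unitary V hVu σ, ?_⟩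
  have hdiag : Matrix.diagonal ((RCLike.ofReal ∘ ev) ∘ ⇑σ) = ind N m := by
    rw [ind]
    refine congrArg Matrix.diagonal (funext fun a => ?_)
    by_cases ha : (a : ℕ) < m
    · have h1 : ev (σ a) = 1 := (hσ a).mpr ha
      simp [Function.comp_apply, h1, ha]
    · have h1 : ¬ ev (σ a) = 1 := fun h => ha ((hσ a).mp h)
      have h2 : ev (σ a) = 0 := (hev01 (σ a)).resolve_right h1
      simp [Function.comp_apply, h2, ha]
  rw [spec, ← submatrix_conj_eq V (RCLike.ofReal ∘ ev) σ, hdiag]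

end Aux

open Matrix

theorem conj_mul_of_orthogonal_eigenspaces (N i j : ℕ) (hN : 0 < N) (hij : i + j ≤ N)
    (S T : Matrix (Fin N) (Fin N) ℂ)
    (hS : S ∈ Matrix.specialUnitaryGroup (Fin N) ℂ)
    (hT : T ∈ Matrix.specialUnitaryGroup (Fin N) ℂ)
    (hSc : ConjIn N S (Phi N i)) (hTc : ConjIn N T (Phi N j))
    (horth : ∀ u ∈ eigSp N S (-(zeta N) ^ i), ∀ v ∈ eigSp N T (-(zeta N) ^ j),
      (inner ℂ u v : ℂ) = 0) :
    ConjIn N (S * T) (Phi N (i + j)) := by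
  obtain ⟨P, hPH, hPP, hPtr, hSP⟩ := exists_proj (by omega) S hSc
  obtain ⟨Q, hQH, hQQ, hQtr, hTQ⟩ := exists_proj (by omega) T hTc
  have hPQ : P * Q = 0 := by
    ext a b
    have h0 := horth (WithLp.toLp 2 (P.mulVec (Pi.single a 1))) (mem_eigSp_of_proj S P hPP hSP _)
      (WithLp.toLp 2 (Q.mulVec (Pi.single b 1))) (mem_eigSp_of_proj T Q hQQ hTQ _)
    rw [PiLp.inner_apply] at h0
    simp only [RCLike.inner_apply', WithLp.ofLp_toLp] at h0
    have hterm : ∀ k, (starRingEnd ℂ) (P.mulVec (Pi.single a 1) k)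
        * (Q.mulVec (Pi.single b 1) k) = P a k * Q k b := by
      intro k
      have h1 : P.mulVec (Pi.single a 1) k = P k a := by simp [Matrix.mulVec_single]
      have h2 : Q.mulVec (Pi.single b 1) k = Q k b := by simp [Matrix.mulVec_single]
      rw [h1, h2]
      have h3 : (starRingEnd ℂ) (P k a) = P a k := by
        conv_rhs => rw [← hPH]
        rw [Matrix.conjTranspose_apply]
        rfl
      rw [h3]
    rw [Finset.sum_congr rfl (fun k _ => hterm k)] at h0
    simp only [Matrix.mul_apply, Matrix.zero_apply]
    exact h0
  have hQP : Q * P = 0 := by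
    have := congrArg Matrix.conjTranspose hPQ
    simpa [Matrix.conjTranspose_mul, hPH, hQH] using this
  set R : Matrix (Fin N) (Fin N) ℂ := P + Q with hR
  have hRH : Rᴴ = R := by rw [hR, Matrix.conjTranspose_add, hPH, hQH]
  have hRR : R * R = R := by
    rw [hR, add_mul, mul_add, mul_add, hPP, hQQ, hPQ, hQP]
    abel
  have hRtr : R.trace = ((i + j : ℕ) : ℂ) := by
    rw [hR, Matrix.trace_add, hPtr, hQtr]
    push_cast
    ring
  obtain ⟨W, hWu, hWR⟩ := proj_conj hij R hRH hRR hRtr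
  have hW1 : W * Wᴴ = 1 := by
    have := Matrix.mem_unitaryGroup_iff.mp hWu
    rwa [Matrix.star_eq_conjTranspose] at this
  have hST : S * T = W * Phi N (i + j) * Wᴴ := by
    rw [hSP, hTQ, Matrix.smul_mul, Matrix.mul_smul, smul_smul, ← pow_add]
    have hprod : ((1 : Matrix (Fin N) (Fin N) ℂ) - (2 : ℂ) • P)
        * ((1 : Matrix (Fin N) (Fin N) ℂ) - (2 : ℂ) • Q)
        = (1 : Matrix (Fin N) (Fin N) ℂ) - (2 : ℂ) • R := by
      have h4 : (2 : ℂ) • P * ((2 : ℂ) • Q) = 0 := by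
        rw [smul_mul_assoc, mul_smul_comm, hPQ]
        simp
      rw [Matrix.mul_sub, Matrix.sub_mul, Matrix.sub_mul, Matrix.mul_one, Matrix.mul_one,
        Matrix.one_mul, h4, hR, smul_add]
      abel
    rw [hprod]
    have hconj : (1 : Matrix (Fin N) (Fin N) ℂ) - (2 : ℂ) • R
        = W * ((1 : Matrix (Fin N) (Fin N) ℂ) - (2 : ℂ) • ind N (i + j)) * Wᴴ := by
      rw [Matrix.mul_sub, Matrix.sub_mul, Matrix.mul_one, hW1]
      rw [mul_smul_comm, smul_mul_assoc, ← hWR]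
    rw [hconj, phi_eq]
    rw [mul_smul_comm, smul_mul_assoc]
  exact conjIn_of_unitary hN W (Phi N (i + j)) (S * T) hWu hST
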